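/- Under Assumptions A with ε_m < ε_M, define p_n(≥m) := Σ_{j=m}^{B_n} p_n(j), and suppose that for every ε ∈ (ε_m, ε_M) the limit log 𝒫(≥ε) := lim_{n→∞} (1/n)·log p_n(≥⌊εn⌋) exists and that ε ↦ log 𝒫(≥ε) is continuous on (ε_m, ε_M). Let (δ_n) be a sequence of natural numbers with A_n < δ_n < B_n for all n ≥ N₀ (some N₀) and δ_n/n → δ with ε_m < δ < ε_M. Then limsup_{n→∞} (1/n)·log p_n(δ_n) ≤ log 𝒫(≥δ). -/

import Mathlib

open Filter Set

/-- Under Assumptions A with `ε_m < ε_M`, with `p_n(≥m) = Σ_{j=m}^{B_n} p n j`: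
if for every `ε ∈ (ε_m, ε_M)` the limit `log 𝒫(≥ε) = lim (1/n) log p_n(≥⌊εn⌋)`
exists and is continuous in `ε`, and `(δ_n)` satisfies `A_n < δ_n < B_n`
eventually with `δ_n/n → δ ∈ (ε_m, ε_M)`, then
`limsup (1/n) log p n δ_n ≤ log 𝒫(≥δ)`. -/
theorem limsup_le_integrated_ge
    (p : ℕ → ℕ → ℕ) (A B : ℕ → ℕ) (K C : ℝ)
    (hK : 0 < K) (hpK : ∀ n, 1 ≤ n → ∀ m, (p n m : ℝ) ≤ K ^ n)
    (hC : 0 < C)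
    (hABle : ∀ n, 1 ≤ n → A n ≤ B n)
    (hBC : ∀ n, 1 ≤ n → (B n : ℝ) ≤ C * n)
    (hpos : ∀ n, 1 ≤ n → ∀ m, A n ≤ m → m ≤ B n → 0 < p n m)
    (hzero : ∀ n, 1 ≤ n → ∀ m, (m < A n ∨ B n < m) → p n m = 0)
    (hsuper : ∀ n₁ n₂, 1 ≤ n₁ → 1 ≤ n₂ → ∀ m₁ m₂,
      p n₁ m₁ * p n₂ m₂ ≤ p (n₁ + n₂) (m₁ + m₂))
    (εm εM : ℝ)
    (hεm : Tendsto (fun n : ℕ => (A n : ℝ) / n) atTop (nhds εm))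
    (hεM : Tendsto (fun n : ℕ => (B n : ℝ) / n) atTop (nhds εM))
    (hlt : εm < εM)
    (logPge : ℝ → ℝ)
    (hPge : ∀ ε ∈ Set.Ioo εm εM,
      Tendsto (fun n : ℕ =>
          Real.log (∑ j ∈ Finset.Icc ⌊ε * n⌋₊ (B n), p n j) / n)
        atTop (nhds (logPge ε)))
    (hcont : ContinuousOn logPge (Set.Ioo εm εM))
    (δseq : ℕ → ℕ) (N₀ : ℕ)
    (hδseq : ∀ n, N₀ ≤ n → A n < δseq n ∧ δseq n < B n)
    (δ : ℝ) (hδ : δ ∈ Set.Ioo εm εM)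
    (htend : Tendsto (fun n : ℕ => (δseq n : ℝ) / n) atTop (nhds δ)) :
    Filter.limsup (fun n : ℕ => Real.log (p n (δseq n)) / n) atTop ≤ logPge δ := by
  set f : ℕ → ℝ := fun n => Real.log (p n (δseq n)) / n with hf
  -- eventual nonnegativity of f
  have hfnn : ∀ᶠ n in atTop, (0:ℝ) ≤ f n := by
    filter_upwards [eventually_ge_atTop (max N₀ 1)] with n hn
    have hn1 : 1 ≤ n := le_trans (le_max_right _ _) hn
    have hN : N₀ ≤ n := le_trans (le_max_left _ _) hn
    have hp : 0 < p n (δseq n) :=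
      hpos n hn1 _ (le_of_lt (hδseq n hN).1) (le_of_lt (hδseq n hN).2)
    have h1 : (1:ℝ) ≤ (p n (δseq n) : ℝ) := by exact_mod_cast hp
    have : 0 ≤ Real.log (p n (δseq n)) := Real.log_nonneg h1
    positivity
  have key : ∀ ε ∈ Set.Ioo εm δ, Filter.limsup f atTop ≤ logPge ε := by
    intro ε hε
    have hεIoo : ε ∈ Set.Ioo εm εM := ⟨hε.1, hε.2.trans hδ.2⟩
    have hg := hPge ε hεIoo
    set g : ℕ → ℝ := fun n =>
      Real.log (∑ j ∈ Finset.Icc ⌊ε * n⌋₊ (B n), p n j) / n with hgdef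
    have hev : ∀ᶠ n in atTop, f n ≤ g n := by
      have h1 : ∀ᶠ n : ℕ in atTop, ε < (δseq n : ℝ) / n :=
        htend.eventually (eventually_gt_nhds hε.2)
      filter_upwards [h1, eventually_ge_atTop (max N₀ 1)] with n hεn hn
      have hn1 : 1 ≤ n := le_trans (le_max_right _ _) hn
      have hN : N₀ ≤ n := le_trans (le_max_left _ _) hn
      have hnpos : (0:ℝ) < n := by exact_mod_cast hn1
      have hεδ : ε * n ≤ (δseq n : ℝ) :=
        le_of_lt ((lt_div_iff₀ hnpos).1 hεn)
      have hfloor : ⌊ε * n⌋₊ ≤ δseq n := by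
        have := Nat.floor_le_floor (R := ℝ) hεδ
        simpa using this
      have hmem : δseq n ∈ Finset.Icc ⌊ε * n⌋₊ (B n) :=
        Finset.mem_Icc.2 ⟨hfloor, le_of_lt (hδseq n hN).2⟩
      have hsum : p n (δseq n) ≤ ∑ j ∈ Finset.Icc ⌊ε * n⌋₊ (B n), p n j :=
        Finset.single_le_sum (fun j _ => Nat.zero_le _) hmem
      have hp : 0 < p n (δseq n) :=
        hpos n hn1 _ (le_of_lt (hδseq n hN).1) (le_of_lt (hδseq n hN).2)
      have hlog : Real.log (p n (δseq n)) ≤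
          Real.log (∑ j ∈ Finset.Icc ⌊ε * n⌋₊ (B n), p n j) := by
        apply Real.log_le_log (by exact_mod_cast hp)
        exact_mod_cast hsum
      exact div_le_div_of_nonneg_right hlog hnpos.le
    have hcob : atTop.IsCoboundedUnder (· ≤ ·) f :=
      isCoboundedUnder_le_of_eventually_le atTop hfnn
    have hbdd : atTop.IsBoundedUnder (· ≤ ·) g := hg.isBoundedUnder_le
    calc Filter.limsup f atTop ≤ Filter.limsup g atTop :=
          limsup_le_limsup hev hcob hbdd
      _ = logPge ε := hg.limsup_eq
  -- pass to the limit ε → δ⁻ using continuity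
  have hct : ContinuousAt logPge δ :=
    hcont.continuousAt (isOpen_Ioo.mem_nhds hδ)
  have htd : Tendsto logPge (nhdsWithin δ (Set.Ioo εm δ)) (nhds (logPge δ)) :=
    hct.continuousWithinAt.tendsto
  have hne : (nhdsWithin δ (Set.Ioo εm δ)).NeBot := by
    apply mem_closure_iff_nhdsWithin_neBot.1
    rw [closure_Ioo (ne_of_lt hδ.1)]
    exact ⟨le_of_lt hδ.1, le_refl δ⟩
  refine ge_of_tendsto htd ?_
  filter_upwards [self_mem_nhdsWithin] with ε hε
  exact key ε hε
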